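/- Let X have a negative binomial distribution NBin(R, p) with R > 0 and p \in (0,1), i.e. P(X=x) = \Gamma(x+R)/(x! \Gamma(R)) (1-p)^x p^R for x = 0,1,2,.... Let q \ge 1 and M_0 \ge q - 2 be integers. Then \sum_{x=M_0+2}^{\infty} x^q P(X = x) \le 2^{q(q-1)/2} R(R+1)\cdots(R+q-1) ((1-p)/p)^q P(\tilde X > M_0 + 1 - q), where \tilde X ~ NBin(R+q, p). -/

import Mathlib

/-- Negative binomial probability mass function `NBin(R, p)`:
`P(X = x) = Γ(x+R)/(x! Γ(R)) (1-p)^x p^R`. -/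
noncomputable def nbinPMFval (R p : ℝ) (x : ℕ) : ℝ :=
  Real.Gamma (x + R) / (x.factorial * Real.Gamma R) * (1 - p) ^ x * p ^ R

lemma nbin_pos (R p : ℝ) (hR : 0 < R) (hp0 : 0 < p) (hp1 : p < 1) (x : ℕ) :
    0 < nbinPMFval R p x := by
  unfold nbinPMFval
  have h1 : 0 < Real.Gamma (x + R) := Real.Gamma_pos_of_pos (by positivity)
  have h2 : 0 < Real.Gamma R := Real.Gamma_pos_of_pos hR
  have h3 : (0:ℝ) < 1 - p := by linarith
  have h4 : (0:ℝ) < x.factorial := by exact_mod_cast x.factorial_pos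
  positivity

lemma nbin_step (R p : ℝ) (hR : 0 < R) (hp0 : 0 < p) (x : ℕ) (hx : 1 ≤ x) :
    ((x:ℝ)) * nbinPMFval R p x = R * ((1-p)/p) * nbinPMFval (R+1) p (x-1) := by
  obtain ⟨y, rfl⟩ : ∃ y, x = y + 1 := ⟨x - 1, by omega⟩
  simp only [Nat.add_sub_cancel]
  unfold nbinPMFval
  have e1 : ((y+1:ℕ):ℝ) + R = (y:ℝ) + (R + 1) := by push_cast; ring
  rw [e1]
  have e2 : Real.Gamma (R+1) = R * Real.Gamma R := Real.Gamma_add_one hR.ne'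
  have e3 : p ^ (R+1) = p ^ R * p := by
    rw [Real.rpow_add hp0, Real.rpow_one]
  have e4 : ((y+1:ℕ).factorial : ℝ) = ((y:ℝ)+1) * y.factorial := by
    rw [Nat.factorial_succ]; push_cast; ring
  have hΓ : Real.Gamma R ≠ 0 := (Real.Gamma_pos_of_pos hR).ne'
  have hf : (y.factorial : ℝ) ≠ 0 := by exact_mod_cast y.factorial_pos.ne'
  rw [e2, e3, e4]
  push_cast
  field_simp
  ring

lemma nbin_fall (p : ℝ) (hp0 : 0 < p) (q : ℕ) :
    ∀ (R : ℝ), 0 < R → ∀ x : ℕ, q ≤ x →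
    (∏ i ∈ Finset.range q, ((x:ℝ) - i)) * nbinPMFval R p x
      = (∏ i ∈ Finset.range q, (R + i)) * ((1-p)/p) ^ q * nbinPMFval (R + q) p (x - q) := by
  induction q with
  | zero => intro R hR x _; simp
  | succ n ih =>
    intro R hR x hx
    rw [Finset.prod_range_succ, Finset.prod_range_succ]
    have hnx : n ≤ x := by omega
    have h1 : (∏ i ∈ Finset.range n, ((x:ℝ) - i)) * nbinPMFval R p x
        = (∏ i ∈ Finset.range n, (R + i)) * ((1-p)/p) ^ n * nbinPMFval (R + n) p (x - n) :=
      ih R hR x hnx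
    have hxn : 1 ≤ x - n := by omega
    have hcast : ((x - n : ℕ) : ℝ) = (x:ℝ) - n := by
      push_cast [hnx]; ring
    have h2 : ((x:ℝ) - n) * nbinPMFval (R + n) p (x - n)
        = (R + n) * ((1-p)/p) * nbinPMFval (R + n + 1) p (x - n - 1) := by
      rw [← hcast]
      exact nbin_step (R + n) p (by positivity) hp0 (x - n) hxn
    have e1 : x - n - 1 = x - (n + 1) := by omega
    have e2 : R + ((n:ℝ) + 1) = R + n + 1 := by ring
    have e3 : R + ((n+1 : ℕ) : ℝ) = R + n + 1 := by push_cast; ring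
    calc (∏ i ∈ Finset.range n, ((x:ℝ) - i)) * ((x:ℝ) - n) * nbinPMFval R p x
        = ((x:ℝ) - n) * ((∏ i ∈ Finset.range n, ((x:ℝ) - i)) * nbinPMFval R p x) := by ring
      _ = ((x:ℝ) - n) * ((∏ i ∈ Finset.range n, (R + i)) * ((1-p)/p) ^ n * nbinPMFval (R + n) p (x - n)) := by rw [h1]
      _ = (∏ i ∈ Finset.range n, (R + i)) * ((1-p)/p) ^ n * (((x:ℝ) - n) * nbinPMFval (R + n) p (x - n)) := by ring
      _ = (∏ i ∈ Finset.range n, (R + i)) * ((1-p)/p) ^ n * ((R + n) * ((1-p)/p) * nbinPMFval (R + n + 1) p (x - n - 1)) := by rw [h2]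
      _ = (∏ i ∈ Finset.range n, (R + i)) * (R + n) * ((1-p)/p) ^ (n+1) * nbinPMFval (R + ((n+1:ℕ):ℝ)) p (x - (n+1)) := by
          rw [e1, e3]; ring

lemma pow_le_fall (q x : ℕ) (hqx : q ≤ x) :
    (x:ℝ)^q ≤ 2^(q*(q-1)/2) * ∏ i ∈ Finset.range q, ((x:ℝ) - i) := by
  have key : ∀ i ∈ Finset.range q, (x:ℝ) ≤ 2^i * ((x:ℝ) - i) := by
    intro i hi
    rw [Finset.mem_range] at hi
    have h1 : (i:ℝ) + 1 ≤ x := by exact_mod_cast Nat.succ_le_of_lt (lt_of_lt_of_le hi hqx)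
    have h2 : (i:ℝ) + 1 ≤ 2^i := by exact_mod_cast (Nat.lt_two_pow_self (n := i))
    nlinarith [pow_nonneg (by norm_num : (0:ℝ) ≤ 2) i]
  calc (x:ℝ)^q = ∏ _i ∈ Finset.range q, (x:ℝ) := by
        rw [Finset.prod_const, Finset.card_range]
    _ ≤ ∏ i ∈ Finset.range q, (2^i * ((x:ℝ) - i)) := by
        refine Finset.prod_le_prod (fun i _ => by positivity) key
    _ = (∏ i ∈ Finset.range q, (2:ℝ)^i) * ∏ i ∈ Finset.range q, ((x:ℝ) - i) := by
        rw [Finset.prod_mul_distrib]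
    _ = 2^(q*(q-1)/2) * ∏ i ∈ Finset.range q, ((x:ℝ) - i) := by
        rw [Finset.prod_pow_eq_pow_sum, Finset.sum_range_id]

lemma nbin_succ (R p : ℝ) (hR : 0 < R) (hp0 : 0 < p) (n : ℕ) :
    nbinPMFval R p (n+1) = ((n:ℝ) + R) / ((n:ℝ) + 1) * (1 - p) * nbinPMFval R p n := by
  unfold nbinPMFval
  have e1 : ((n+1:ℕ):ℝ) + R = ((n:ℝ) + R) + 1 := by push_cast; ring
  rw [e1, Real.Gamma_add_one (by positivity)]
  have e4 : ((n+1:ℕ).factorial : ℝ) = ((n:ℝ)+1) * n.factorial := by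
    rw [Nat.factorial_succ]; push_cast; ring
  rw [e4]
  have hf : (n.factorial : ℝ) ≠ 0 := by exact_mod_cast n.factorial_pos.ne'
  have h1 : ((n:ℝ)+1) ≠ 0 := by positivity
  rw [pow_succ]
  field_simp

lemma nbin_summable (R p : ℝ) (hR : 0 < R) (hp0 : 0 < p) (hp1 : p < 1) :
    Summable (fun x : ℕ => nbinPMFval R p x) := by
  apply summable_of_ratio_test_tendsto_lt_one (l := 1 - p) (by linarith)
  · filter_upwards with n
    exact (nbin_pos R p hR hp0 hp1 n).ne'
  · have heq : ∀ n : ℕ, ‖nbinPMFval R p (n+1)‖ / ‖nbinPMFval R p n‖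
        = (1 + (R - 1) / ((n:ℝ) + 1)) * (1 - p) := by
      intro n
      rw [Real.norm_of_nonneg (nbin_pos R p hR hp0 hp1 (n+1)).le,
          Real.norm_of_nonneg (nbin_pos R p hR hp0 hp1 n).le, nbin_succ R p hR hp0 n,
          mul_div_assoc, div_self (nbin_pos R p hR hp0 hp1 n).ne', mul_one]
      have h1 : ((n:ℝ)+1) ≠ 0 := by positivity
      field_simp
      ring
    simp only [heq]
    have h0 : Filter.Tendsto (fun n : ℕ => (R - 1) / ((n:ℝ) + 1)) Filter.atTop (nhds 0) := by
      have := tendsto_one_div_add_atTop_nhds_zero_nat.const_mul (R - 1)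
      simpa [div_eq_mul_inv, mul_comm] using this
    have : Filter.Tendsto (fun n : ℕ => (1 + (R - 1) / ((n:ℝ) + 1)) * (1 - p))
        Filter.atTop (nhds ((1 + 0) * (1 - p))) :=
      (((tendsto_const_nhds).add h0).mul tendsto_const_nhds)
    simpa using this

theorem stmt11 (R p : ℝ) (hR : 0 < R) (hp0 : 0 < p) (hp1 : p < 1)
    (q M0 : ℕ) (hq : 1 ≤ q) (hM0 : (q : ℤ) - 2 ≤ (M0 : ℤ)) :
    ∑' x : ℕ, ((M0 + 2 + x : ℕ) : ℝ) ^ q * nbinPMFval R p (M0 + 2 + x)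
      ≤ 2 ^ (q * (q - 1) / 2) * (∏ i ∈ Finset.range q, (R + i)) * ((1 - p) / p) ^ q *
        ∑' x : ℕ, if (M0 : ℤ) + 1 - (q : ℤ) < (x : ℤ) then nbinPMFval (R + q) p x else 0 := by
  have hq2 : q ≤ M0 + 2 := by omega
  set m : ℕ := M0 + 2 - q with hm
  set C2 : ℝ := 2 ^ (q * (q - 1) / 2) * (∏ i ∈ Finset.range q, (R + i)) * ((1 - p) / p) ^ q
    with hC2
  have hRq : 0 < R + q := by positivity
  have hC2nonneg : 0 ≤ C2 := by
    rw [hC2]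
    have h1 : ∀ i ∈ Finset.range q, (0:ℝ) ≤ R + i := fun i _ => by positivity
    have h2 : (0:ℝ) ≤ ∏ i ∈ Finset.range q, (R + i) := Finset.prod_nonneg h1
    have h3 : (0:ℝ) ≤ (1 - p) / p := by
      apply div_nonneg <;> linarith
    positivity
  set g : ℕ → ℝ := fun n => ((M0 + 2 + n : ℕ) : ℝ) ^ q * nbinPMFval R p (M0 + 2 + n) with hg
  set h : ℕ → ℝ := fun x => nbinPMFval (R + q) p x with hh
  set k : ℕ → ℝ := fun x => if (M0 : ℤ) + 1 - (q : ℤ) < (x : ℤ) then nbinPMFval (R + q) p x else 0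
    with hk
  -- termwise bound
  have hterm : ∀ n : ℕ, g n ≤ C2 * h (m + n) := by
    intro n
    set x : ℕ := M0 + 2 + n with hx
    have hqx : q ≤ x := by omega
    have hnb : 0 ≤ nbinPMFval R p x := (nbin_pos R p hR hp0 hp1 x).le
    have hsub : x - q = m + n := by omega
    calc g n = (x:ℝ)^q * nbinPMFval R p x := rfl
      _ ≤ (2^(q*(q-1)/2) * ∏ i ∈ Finset.range q, ((x:ℝ) - i)) * nbinPMFval R p x :=
          mul_le_mul_of_nonneg_right (pow_le_fall q x hqx) hnb
      _ = 2^(q*(q-1)/2) * ((∏ i ∈ Finset.range q, ((x:ℝ) - i)) * nbinPMFval R p x) := by ring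
      _ = 2^(q*(q-1)/2) * ((∏ i ∈ Finset.range q, (R + i)) * ((1-p)/p) ^ q
            * nbinPMFval (R + q) p (x - q)) := by rw [nbin_fall p hp0 q R hR x hqx]
      _ = C2 * h (m + n) := by rw [hC2, hh, hsub]; ring
  -- summability
  have hsum_h : Summable h := nbin_summable (R + q) p hRq hp0 hp1
  have hsum_hshift : Summable (fun n => h (m + n)) :=
    hsum_h.comp_injective (add_right_injective m)
  have hsum_Ch : Summable (fun n => C2 * h (m + n)) := hsum_hshift.mul_left C2
  have hsum_g : Summable g := by
    apply Summable.of_nonneg_of_le _ hterm hsum_Ch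
    intro n
    exact mul_nonneg (by positivity) (nbin_pos R p hR hp0 hp1 _).le
  have hsum_k : Summable k := by
    apply Summable.of_nonneg_of_le _ _ hsum_h
    · intro n
      rw [hk]
      dsimp only
      split
      · exact (nbin_pos (R+q) p hRq hp0 hp1 n).le
      · exact le_rfl
    · intro n
      rw [hk]
      dsimp only
      split
      · exact le_rfl
      · exact (nbin_pos (R+q) p hRq hp0 hp1 n).le
  -- chain
  calc ∑' n, g n ≤ ∑' n, C2 * h (m + n) := Summable.tsum_le_tsum hterm hsum_g hsum_Ch
    _ = C2 * ∑' n, h (m + n) := tsum_mul_left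
    _ ≤ C2 * ∑' x, k x := by
        apply mul_le_mul_of_nonneg_left _ hC2nonneg
        apply Summable.tsum_le_tsum_of_inj (fun n => m + n) (add_right_injective m)
        · intro c _
          rw [hk]; dsimp only
          split
          · exact (nbin_pos (R+q) p hRq hp0 hp1 c).le
          · exact le_rfl
        · intro n
          rw [hk]; dsimp only
          rw [if_pos]
          · have : ((m + n : ℕ) : ℤ) = (M0 : ℤ) + 2 - q + n := by omega
            omega
        · exact hsum_hshift
        · exact hsum_k
    _ = 2 ^ (q * (q - 1) / 2) * (∏ i ∈ Finset.range q, (R + i)) * ((1 - p) / p) ^ q *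
        ∑' x, k x := by rw [hC2]
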